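/- For all α > 0 there exists a constant 0 < C_α < ∞ such that, for every discrete-time Markov transition kernel g with stationary distribution π and finite standardized mixing time t̄_m, and for all k ∈ ℕ with k ≥ 1, the maximum hitting time of the k-skeleton satisfies t_H^{(k)}(α) ≤ C_α ⌈ t̄_m / k ⌉. -/

import Mathlib

open MeasureTheory ENNReal

noncomputable section

namespace MixHit

variable {X : Type*} [MeasurableSpace X]

/-- Total variation distance between two Borel measures. -/
def tv (μ ν : Measure X) : ℝ≥0∞ :=
  ⨆ (A : Set X) (_ : MeasurableSet A), (μ A - ν A) ⊔ (ν A - μ A)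

/-- `g` is a Markov transition kernel: each `g x` is a (Borel) probability measure,
measurably in `x`. -/
def IsMarkov (g : X → Measure X) : Prop :=
  (∀ x, IsProbabilityMeasure (g x)) ∧
    ∀ A : Set X, MeasurableSet A → Measurable fun x => g x A

/-- `t`-step transition probabilities (`iterK g 0 x = δ_x`). -/
def iterK (g : X → Measure X) : ℕ → X → Measure X
  | 0 => fun x => Measure.dirac x
  | n + 1 => fun x => (g x).bind (iterK g n)

/-- `π` is a stationary distribution for `g`. -/
def Stationary (g : X → Measure X) (π : Measure X) : Prop :=
  ∀ A : Set X, MeasurableSet A → ∫⁻ x, g x A ∂π = π A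

/-- `g` is reversible with respect to `π`. -/
def Reversible (g : X → Measure X) (π : Measure X) : Prop :=
  ∀ A B : Set X, MeasurableSet A → MeasurableSet B →
    ∫⁻ x in A, g x B ∂π = ∫⁻ x in B, g x A ∂π

/-- The lazy kernel `g_L(x,·) = (1/2) g(x,·) + (1/2) δ_x`. -/
def lazy (g : X → Measure X) : X → Measure X := fun x =>
  (2 : ℝ≥0∞)⁻¹ • g x + (2 : ℝ≥0∞)⁻¹ • Measure.dirac x

/-- Mixing time `min {t : sup_x ‖g^t(x,·) − π‖ ≤ ε}`, as an element of `ℝ≥0∞`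
(`⊤` if there is no such `t`). -/
def mixTime (g : X → Measure X) (π : Measure X) (ε : ℝ≥0∞) : ℝ≥0∞ :=
  ⨅ (t : ℕ) (_ : ∀ x, tv (iterK g t x) π ≤ ε), (t : ℝ≥0∞)

/-- `d̄(t) = sup_{x,y} ‖g^t(x,·) − g^t(y,·)‖`. -/
def dbar (g : X → Measure X) (t : ℕ) : ℝ≥0∞ :=
  ⨆ (x : X) (y : X), tv (iterK g t x) (iterK g t y)

/-- Standardized mixing time `min {t : d̄(t) ≤ ε}` (`⊤` if there is no such `t`). -/
def stdMix (g : X → Measure X) (ε : ℝ≥0∞) : ℝ≥0∞ :=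
  ⨅ (t : ℕ) (_ : dbar g t ≤ ε), (t : ℝ≥0∞)

/-- `P_x(τ_A = t)` for the chain with kernel `g` started at `x`, where
`τ_A = min {t : X_t ∈ A}` (first-step recursion). -/
def hitEq (g : X → Measure X) (A : Set X) : ℕ → X → ℝ≥0∞
  | 0 => fun x => A.indicator (fun _ => 1) x
  | n + 1 => fun x => Aᶜ.indicator (fun x' => ∫⁻ y, hitEq g A n y ∂(g x')) x

/-- `P_x(τ_A ≤ t)`. -/
def hitLE (g : X → Measure X) (A : Set X) (t : ℕ) (x : X) : ℝ≥0∞ :=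
  ∑ s ∈ Finset.range (t + 1), hitEq g A s x

/-- `E_x[τ_A] = ∑_{t ≥ 0} P_x(τ_A > t)`. -/
def expHit (g : X → Measure X) (A : Set X) (x : X) : ℝ≥0∞ :=
  ∑' t : ℕ, (1 - hitLE g A t x)

/-- Maximum hitting time `t_H(α) = sup {E_x[τ_A] : x ∈ X, A Borel, π(A) ≥ α}`. -/
def maxHit (g : X → Measure X) (π : Measure X) (α : ℝ) : ℝ≥0∞ :=
  ⨆ (x : X) (A : Set X) (_ : MeasurableSet A) (_ : ENNReal.ofReal α ≤ π A),
    expHit g A x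

/-- Large hitting time
`τ_g(α) = min {t : inf {P_x(τ_A ≤ t) : x ∈ X, A Borel, π(A) ≥ α} > 0.9}`. -/
def largeHit (g : X → Measure X) (π : Measure X) (α : ℝ) : ℝ≥0∞ :=
  ⨅ (t : ℕ) (_ : (9 / 10 : ℝ≥0∞) <
      ⨅ (x : X) (A : Set X) (_ : MeasurableSet A) (_ : ENNReal.ofReal α ≤ π A),
        hitLE g A t x),
    (t : ℝ≥0∞)

/-- The strong Feller property: continuity of `x ↦ g(x,·)` in total variation. -/
def StrongFeller [PseudoMetricSpace X] (g : X → Measure X) : Prop :=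
  ∀ x : X, ∀ ε : ℝ, 0 < ε → ∃ δ : ℝ, 0 < δ ∧
    ∀ y : X, dist y x < δ → tv (g x) (g y) < ENNReal.ofReal ε

/-- Law of `X_t` on the event that `t` is the first time the chain lies in `S`. -/
def enterDist (g : X → Measure X) (S : Set X) : ℕ → X → Measure X
  | 0 => fun x => (Measure.dirac x).restrict S
  | n + 1 => fun x => Sᶜ.indicator (fun x' => (g x').bind (enterDist g S n)) x

/-- Law of the chain's position at its first entrance (at a time `≥ 0`) into `S`. -/
def hitMeasure (g : X → Measure X) (S : Set X) (x : X) : Measure X :=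
  Measure.sum fun t => enterDist g S t x

/-- One step of the trace of `g` on `S`: take one `g`-step, then run until the
first entrance into `S`. -/
def traceK (g : X → Measure X) (S : Set X) : X → Measure X :=
  fun x => (g x).bind (hitMeasure g S)

/-- The trace of `g` on `S`, viewed as a kernel on the subtype `S`. -/
def traceSub (g : X → Measure X) (S : Set X) : S → Measure S :=
  fun x => (traceK g S (x : X)).comap (Subtype.val)

/-- Normalization of `π` to `S`, as a measure on the subtype `S`. -/
def normSub (π : Measure X) (S : Set X) : Measure S :=
  (π S)⁻¹ • π.comap (Subtype.val : S → X)

/-- Ergodicity: from every starting point, the chain converges to `π`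
in total variation. -/
def ErgodicK (g : X → Measure X) (π : Measure X) : Prop :=
  Stationary g π ∧
    ∀ x : X, Filter.Tendsto (fun t => tv (iterK g t x) π) Filter.atTop (nhds 0)



section Aux

variable {g : X → Measure X} {π : Measure X}

lemma IsMarkov.measurable (hg : IsMarkov g) : Measurable g :=
  Measure.measurable_of_measurable_coe _ (fun _ hs => hg.2 _ hs)

lemma isMarkov_of_measurable (h1 : ∀ x, IsProbabilityMeasure (g x))
    (h2 : Measurable g) : IsMarkov g :=
  ⟨h1, fun _ hA => (Measure.measurable_coe hA).comp h2⟩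

lemma measurable_iterK (hg : IsMarkov g) : ∀ n, Measurable (iterK g n)
  | 0 => Measure.measurable_dirac
  | (n+1) => (Measure.measurable_bind' (measurable_iterK hg n)).comp hg.measurable

lemma isMarkov_iterK (hg : IsMarkov g) (n : ℕ) : IsMarkov (iterK g n) := by
  refine isMarkov_of_measurable ?_ (measurable_iterK hg n)
  induction n with
  | zero => intro x; exact Measure.dirac.isProbabilityMeasure
  | succ n ih =>
    intro x
    haveI := hg.1 x
    constructor
    rw [iterK, Measure.bind_apply MeasurableSet.univ (measurable_iterK hg n).aemeasurable]
    simp [fun y => (ih y).measure_univ]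

lemma iterK_apply (hg : IsMarkov g) {A : Set X} (hA : MeasurableSet A) (n : ℕ) (x : X) :
    iterK g (n+1) x A = ∫⁻ y, iterK g n y A ∂(g x) :=
  Measure.bind_apply hA (measurable_iterK hg n).aemeasurable

lemma chapman (hg : IsMarkov g) (s t : ℕ) (x : X) :
    iterK g (s + t) x = (iterK g s x).bind (iterK g t) := by
  induction s generalizing x with
  | zero => simp [iterK, Measure.dirac_bind (measurable_iterK hg t)]
  | succ s ih =>
    have h0 : s + 1 + t = (s + t) + 1 := by omega
    rw [h0]
    show (g x).bind (iterK g (s + t)) = ((g x).bind (iterK g s)).bind (iterK g t)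
    have h1 : iterK g (s + t) = fun y => (iterK g s y).bind (iterK g t) := funext ih
    rw [h1, ← Measure.bind_bind (measurable_iterK hg s).aemeasurable (measurable_iterK hg t).aemeasurable]

lemma iterK_skeleton (hg : IsMarkov g) (k : ℕ) :
    ∀ (m : ℕ) (x : X), iterK (iterK g k) m x = iterK g (m * k) x := by
  intro m
  induction m with
  | zero => intro x; simp [iterK]
  | succ m ih =>
    intro x
    have h1 : (m+1) * k = k + m * k := by ring
    rw [h1, chapman hg k (m*k) x]
    show (iterK g k x).bind (iterK (iterK g k) m) = _
    congr 1
    exact funext ih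


lemma tv_le_one (μ ν : Measure X) [IsProbabilityMeasure μ] [IsProbabilityMeasure ν] :
    tv μ ν ≤ 1 := by
  refine iSup_le fun A => iSup_le fun _ => sup_le ?_ ?_
  · exact le_trans (tsub_le_self.trans (prob_le_one)) le_rfl
  · exact le_trans (tsub_le_self.trans (prob_le_one)) le_rfl

lemma sub_apply_le_tv (μ ν : Measure X) {A : Set X} (hA : MeasurableSet A) :
    μ A - ν A ≤ tv μ ν :=
  le_trans le_sup_left (le_iSup₂ (f := fun A (_ : MeasurableSet A) => (μ A - ν A) ⊔ (ν A - μ A)) A hA)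

lemma sub_apply_le_tv' (μ ν : Measure X) {A : Set X} (hA : MeasurableSet A) :
    ν A - μ A ≤ tv μ ν :=
  le_trans le_sup_right (le_iSup₂ (f := fun A (_ : MeasurableSet A) => (μ A - ν A) ⊔ (ν A - μ A)) A hA)

lemma apply_le_apply_add_tv (μ ν : Measure X) {A : Set X} (hA : MeasurableSet A) :
    μ A ≤ ν A + tv μ ν :=
  tsub_le_iff_left.mp (sub_apply_le_tv μ ν hA)

/-- Key inequality: for `0 ≤ f ≤ 1`, `∫ f dμ ≤ ∫ f dν + ‖μ - ν‖`. -/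
lemma lintegral_le_add_tv (μ ν : Measure X) [IsProbabilityMeasure μ] [IsProbabilityMeasure ν]
    {f : X → ℝ≥0∞} (hf : Measurable f) (hf1 : ∀ x, f x ≤ 1) :
    ∫⁻ x, f x ∂μ ≤ ∫⁻ x, f x ∂ν + tv μ ν := by
  have hfin : ∀ x, f x ≠ ∞ := fun x => ne_top_of_le_ne_top one_ne_top (hf1 x)
  have hofr : ∀ (ρ : Measure X), ∫⁻ x, f x ∂ρ = ∫⁻ x, ENNReal.ofReal ((f x).toReal) ∂ρ := by
    intro ρ; apply lintegral_congr; intro x; rw [ENNReal.ofReal_toReal (hfin x)]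
  have hmble : Measurable fun x => (f x).toReal := hf.ennreal_toReal
  have hlc : ∀ (ρ : Measure X), ∫⁻ x, f x ∂ρ = ∫⁻ t in Set.Ioi (0:ℝ), ρ {a | t ≤ (f a).toReal} := by
    intro ρ
    rw [hofr ρ]
    exact lintegral_eq_lintegral_meas_le ρ (Filter.Eventually.of_forall fun x => ENNReal.toReal_nonneg)
      hmble.aemeasurable
  have hset : ∀ t : ℝ, 0 < t → {a | t ≤ (f a).toReal} = {a | ENNReal.ofReal t ≤ f a} := by
    intro t ht; ext a
    simp only [Set.mem_setOf_eq]
    rw [ENNReal.ofReal_le_iff_le_toReal (hfin a)]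
  have hSm : ∀ t : ℝ, MeasurableSet {a | t ≤ (f a).toReal} :=
    fun t => measurableSet_le measurable_const hmble
  rw [hlc μ, hlc ν]
  have hempty : ∀ t : ℝ, 1 < t → {a | t ≤ (f a).toReal} = ∅ := by
    intro t ht
    ext a; simp only [Set.mem_setOf_eq, Set.mem_empty_iff_false, iff_false, not_le]
    calc (f a).toReal ≤ 1 := by
          have := ENNReal.toReal_mono one_ne_top (hf1 a); simpa using this
      _ < t := ht
  have hpt : ∀ t : ℝ, t ∈ Set.Ioi (0:ℝ) →
      μ {a | t ≤ (f a).toReal} ≤ ν {a | t ≤ (f a).toReal}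
        + (Set.Ioc (0:ℝ) 1).indicator (fun _ => tv μ ν) t := by
    intro t ht
    rcases le_or_gt t 1 with h | h
    · rw [Set.indicator_of_mem (Set.mem_Ioc.mpr ⟨ht, h⟩)]
      exact apply_le_apply_add_tv μ ν (hSm t)
    · rw [hempty t h]; simp
  have hmono : ∫⁻ t in Set.Ioi (0:ℝ), μ {a | t ≤ (f a).toReal}
      ≤ ∫⁻ t in Set.Ioi (0:ℝ), (ν {a | t ≤ (f a).toReal}
          + (Set.Ioc (0:ℝ) 1).indicator (fun _ => tv μ ν) t) := by
    apply lintegral_mono_ae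
    rw [ae_restrict_iff' measurableSet_Ioi]
    exact Filter.Eventually.of_forall hpt
  refine hmono.trans ?_
  rw [lintegral_add_right _ (measurable_const.indicator measurableSet_Ioc)]
  gcongr
  rw [lintegral_indicator measurableSet_Ioc, Measure.restrict_restrict measurableSet_Ioc,
    lintegral_const, Measure.restrict_apply_univ,
    Set.inter_eq_self_of_subset_left Set.Ioc_subset_Ioi_self, Real.volume_Ioc]
  simp

/-- scaled version -/
lemma lintegral_le_add_mul_tv (μ ν : Measure X) [IsProbabilityMeasure μ] [IsProbabilityMeasure ν]
    {f : X → ℝ≥0∞} (hf : Measurable f) {c : ℝ≥0∞} (hc1 : c ≤ 1) (hfc : ∀ x, f x ≤ c) :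
    ∫⁻ x, f x ∂μ ≤ ∫⁻ x, f x ∂ν + c * tv μ ν := by
  rcases eq_or_ne c 0 with rfl | hc0
  · have : ∀ x, f x = 0 := fun x => le_antisymm (hfc x) zero_le
    simp [lintegral_congr this]
  · have hct : c ≠ ∞ := ne_top_of_le_ne_top one_ne_top hc1
    set f' : X → ℝ≥0∞ := fun x => c⁻¹ * f x with hf'
    have hf'm : Measurable f' := measurable_const.mul hf
    have hf'1 : ∀ x, f' x ≤ 1 := by
      intro x
      rw [hf']
      calc c⁻¹ * f x ≤ c⁻¹ * c := by gcongr; exact hfc x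
        _ = 1 := ENNReal.inv_mul_cancel hc0 hct
    have key := lintegral_le_add_tv μ ν hf'm hf'1
    have hrec : ∀ (ρ : Measure X), ∫⁻ x, f x ∂ρ = c * ∫⁻ x, f' x ∂ρ := by
      intro ρ
      rw [hf', lintegral_const_mul _ hf, ← mul_assoc, ENNReal.mul_inv_cancel hc0 hct, one_mul]
    rw [hrec μ, hrec ν]
    calc c * ∫⁻ x, f' x ∂μ ≤ c * (∫⁻ x, f' x ∂ν + tv μ ν) := by gcongr
      _ = c * ∫⁻ x, f' x ∂ν + c * tv μ ν := mul_add _ _ _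



lemma add_sub_add_right' {a b m : ℝ≥0∞} (hm : m ≠ ∞) : a + m - (b + m) = a - b := by
  rw [tsub_add_eq_tsub_tsub, tsub_right_comm, ENNReal.add_sub_cancel_right hm]

lemma stationary_bind (hg : IsMarkov g) (hs : Stationary g π) : π.bind g = π := by
  apply Measure.ext
  intro A hA
  rw [Measure.bind_apply hA hg.measurable.aemeasurable]
  exact hs A hA

lemma stationary_iterK (hg : IsMarkov g) (hs : Stationary g π) (t : ℕ)
    {A : Set X} (hA : MeasurableSet A) :
    ∫⁻ y, iterK g t y A ∂π = π A := by
  induction t with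
  | zero => simp [iterK, lintegral_dirac' _ (measurable_one.indicator hA), hA]
  | succ t ih =>
    have h1 : ∀ y, iterK g (t+1) y A = ∫⁻ z, iterK g t z A ∂(g y) :=
      fun y => iterK_apply hg hA t y
    rw [lintegral_congr h1]
    have hm : Measurable fun z => iterK g t z A :=
      (Measure.measurable_coe hA).comp (measurable_iterK hg t)
    rw [← Measure.lintegral_bind hg.measurable.aemeasurable hm.aemeasurable, stationary_bind hg hs]
    exact ih

lemma tv_le_dbar (hg : IsMarkov g) (t : ℕ) (x y : X) :
    tv (iterK g t x) (iterK g t y) ≤ dbar g t :=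
  le_trans (le_iSup (fun y => tv (iterK g t x) (iterK g t y)) y)
    (le_iSup (fun x => ⨆ y, tv (iterK g t x) (iterK g t y)) x)

lemma tv_pi_le_dbar (hg : IsMarkov g) (hπ : IsProbabilityMeasure π)
    (hs : Stationary g π) (t : ℕ) (x : X) :
    tv (iterK g t x) π ≤ dbar g t := by
  refine iSup_le fun A => iSup_le fun hA => sup_le ?_ ?_
  · have h1 : iterK g t x A = ∫⁻ y, iterK g t x A ∂π := by
      simp [lintegral_const]
    have h2 : π A = ∫⁻ y, iterK g t y A ∂π := (stationary_iterK hg hs t hA).symm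
    rw [h1, h2]
    have hmeas : Measurable fun y => iterK g t y A :=
      (Measure.measurable_coe hA).comp (measurable_iterK hg t)
    calc ∫⁻ y, iterK g t x A ∂π - ∫⁻ y, iterK g t y A ∂π
        ≤ ∫⁻ y, (iterK g t x A - iterK g t y A) ∂π :=
          lintegral_sub_le' _ _ hmeas.aemeasurable
      _ ≤ ∫⁻ _, dbar g t ∂π := by
          apply lintegral_mono
          intro y
          exact le_trans (sub_apply_le_tv _ _ hA) (tv_le_dbar hg t x y)
      _ = dbar g t := by simp [lintegral_const]
  · have h1 : iterK g t x A = ∫⁻ y, iterK g t x A ∂π := by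
      simp [lintegral_const]
    have h2 : π A = ∫⁻ y, iterK g t y A ∂π := (stationary_iterK hg hs t hA).symm
    rw [h1, h2]
    calc ∫⁻ y, iterK g t y A ∂π - ∫⁻ y, iterK g t x A ∂π
        ≤ ∫⁻ y, (iterK g t y A - iterK g t x A) ∂π :=
          lintegral_sub_le' _ _ measurable_const.aemeasurable
      _ ≤ ∫⁻ _, dbar g t ∂π := by
          apply lintegral_mono
          intro y
          exact le_trans (sub_apply_le_tv' _ _ hA) (tv_le_dbar hg t x y)
      _ = dbar g t := by simp [lintegral_const]

lemma dbar_le_one (hg : IsMarkov g) (t : ℕ) : dbar g t ≤ 1 := by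
  refine iSup_le fun x => iSup_le fun y => ?_
  haveI := (isMarkov_iterK hg t).1 x
  haveI := (isMarkov_iterK hg t).1 y
  exact tv_le_one _ _

lemma dbar_submul (hg : IsMarkov g) (s t : ℕ) :
    dbar g (s + t) ≤ dbar g s * dbar g t := by
  rcases isEmpty_or_nonempty X with hX | hX
  · simp [dbar, iSup_of_empty]
  refine iSup_le fun x => iSup_le fun y => iSup_le fun A => iSup_le fun hA => ?_
  set h : X → ℝ≥0∞ := fun z => iterK g t z A with hh
  have hhm : Measurable h := (Measure.measurable_coe hA).comp (measurable_iterK hg t)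
  have hh1 : ∀ z, h z ≤ 1 := by
    intro z; haveI := (isMarkov_iterK hg t).1 z; exact prob_le_one
  set m : ℝ≥0∞ := ⨅ z, h z with hm
  have hm1 : m ≤ 1 := le_trans (iInf_le _ hX.some) (hh1 _)
  have hmt : m ≠ ∞ := ne_top_of_le_ne_top one_ne_top hm1
  set f : X → ℝ≥0∞ := fun z => h z - m with hf
  have hfm : Measurable f := hhm.sub measurable_const
  have hfc : ∀ z, f z ≤ dbar g t := by
    intro z
    rw [hf]
    simp only
    rw [ENNReal.sub_iInf]
    refine iSup_le fun w => ?_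
    exact le_trans (le_trans (sub_apply_le_tv _ _ hA) le_rfl) (tv_le_dbar hg t z w)
  have happly : ∀ u : X, iterK g (s + t) u A = ∫⁻ z, f z ∂(iterK g s u) + m := by
    intro u
    haveI := (isMarkov_iterK hg s).1 u
    rw [chapman hg s t u, Measure.bind_apply hA (measurable_iterK hg t).aemeasurable]
    have : ∀ z, h z = f z + m := by
      intro z; rw [hf]; simp only
      rw [tsub_add_cancel_of_le (iInf_le _ z)]
    calc ∫⁻ z, h z ∂(iterK g s u) = ∫⁻ z, (f z + m) ∂(iterK g s u) := lintegral_congr this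
      _ = ∫⁻ z, f z ∂(iterK g s u) + m := by
          rw [lintegral_add_right _ measurable_const, lintegral_const, measure_univ, mul_one]
  haveI := (isMarkov_iterK hg s).1 x
  haveI := (isMarkov_iterK hg s).1 y
  refine sup_le ?_ ?_
  · rw [happly x, happly y, add_sub_add_right' hmt]
    calc ∫⁻ z, f z ∂(iterK g s x) - ∫⁻ z, f z ∂(iterK g s y)
        ≤ (∫⁻ z, f z ∂(iterK g s y) + dbar g t * tv (iterK g s x) (iterK g s y))
            - ∫⁻ z, f z ∂(iterK g s y) := by
          gcongr
          exact lintegral_le_add_mul_tv _ _ hfm (dbar_le_one hg t) hfc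
      _ ≤ dbar g t * tv (iterK g s x) (iterK g s y) := by
          exact tsub_le_iff_left.mpr le_rfl
      _ ≤ dbar g s * dbar g t := by
          rw [mul_comm]
          gcongr
          exact tv_le_dbar hg s x y
  · rw [happly x, happly y, add_sub_add_right' hmt]
    calc ∫⁻ z, f z ∂(iterK g s y) - ∫⁻ z, f z ∂(iterK g s x)
        ≤ (∫⁻ z, f z ∂(iterK g s x) + dbar g t * tv (iterK g s y) (iterK g s x))
            - ∫⁻ z, f z ∂(iterK g s x) := by
          gcongr
          exact lintegral_le_add_mul_tv _ _ hfm (dbar_le_one hg t) hfc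
      _ ≤ dbar g t * tv (iterK g s y) (iterK g s x) := by
          exact tsub_le_iff_left.mpr le_rfl
      _ ≤ dbar g s * dbar g t := by
          rw [mul_comm]
          gcongr
          refine iSup_le fun B => iSup_le fun hB => ?_
          rw [sup_comm]
          exact le_trans (le_iSup₂
            (f := fun B (_ : MeasurableSet B) =>
              (iterK g s x B - iterK g s y B) ⊔ (iterK g s y B - iterK g s x B)) B hB)
            (tv_le_dbar hg s x y)

lemma dbar_anti (hg : IsMarkov g) {a n : ℕ} (h : a ≤ n) : dbar g n ≤ dbar g a := by
  obtain ⟨b, rfl⟩ := Nat.exists_eq_add_of_le h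
  calc dbar g (a + b) ≤ dbar g a * dbar g b := dbar_submul hg a b
    _ ≤ dbar g a * 1 := by gcongr; exact dbar_le_one hg b
    _ = dbar g a := mul_one _

lemma dbar_pow (hg : IsMarkov g) (t ℓ : ℕ) : dbar g (ℓ * t) ≤ (dbar g t) ^ ℓ := by
  induction ℓ with
  | zero => simp [dbar_le_one hg 0]
  | succ ℓ ih =>
    have : (ℓ + 1) * t = ℓ * t + t := by ring
    rw [this, pow_succ]
    exact le_trans (dbar_submul hg (ℓ * t) t) (by gcongr)

end Aux

section Hit

variable {h : X → Measure X} {A : Set X}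

lemma hitEq_measurable (hh : IsMarkov h) (hA : MeasurableSet A) :
    ∀ n, Measurable (hitEq h A n)
  | 0 => measurable_one.indicator hA
  | (n+1) => (((Measure.measurable_lintegral (hitEq_measurable hh hA n)).comp
      hh.measurable)).indicator hA.compl

lemma hitLE_measurable (hh : IsMarkov h) (hA : MeasurableSet A) (t : ℕ) :
    Measurable (hitLE h A t) := by
  unfold hitLE
  exact Finset.measurable_sum _ (fun s _ => hitEq_measurable hh hA s)

lemma hitLE_zero (x : X) : hitLE h A 0 x = A.indicator (fun _ => (1:ℝ≥0∞)) x := by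
  simp [hitLE, hitEq]

lemma hitLE_succ (hh : IsMarkov h) (hA : MeasurableSet A) (t : ℕ) (x : X) :
    hitLE h A (t+1) x
      = A.indicator (fun _ => (1:ℝ≥0∞)) x
        + Aᶜ.indicator (fun x' => ∫⁻ y, hitLE h A t y ∂(h x')) x := by
  unfold hitLE
  rw [Finset.sum_range_succ' (fun s => hitEq h A s x)]
  have h1 : ∀ s, hitEq h A (s+1) x = Aᶜ.indicator (fun x' => ∫⁻ y, hitEq h A s y ∂(h x')) x :=
    fun s => rfl
  have h2 : hitEq h A 0 x = A.indicator (fun _ => (1:ℝ≥0∞)) x := rfl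
  rw [h2, add_comm]
  congr 1
  by_cases hx : x ∈ A
  · have hx' : x ∉ Aᶜ := by simpa using hx
    rw [Set.indicator_of_notMem hx']
    have hz : ∀ k ∈ Finset.range (t+1), hitEq h A (k+1) x = 0 := by
      intro k _
      rw [h1 k, Set.indicator_of_notMem hx']
    rw [Finset.sum_congr rfl hz]
    simp
  · have hx' : x ∈ Aᶜ := by simpa using hx
    rw [Set.indicator_of_mem hx']
    simp only [h1, Set.indicator_of_mem hx']
    rw [← lintegral_finset_sum _ (fun s _ => hitEq_measurable hh hA s)]

lemma hitLE_le_one (hh : IsMarkov h) (hA : MeasurableSet A) :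
    ∀ (t : ℕ) (x : X), hitLE h A t x ≤ 1 := by
  intro t
  induction t with
  | zero =>
    intro x
    rw [hitLE_zero]
    by_cases hx : x ∈ A
    · rw [Set.indicator_of_mem hx]
    · rw [Set.indicator_of_notMem hx]; exact zero_le_one
  | succ t ih =>
    intro x
    rw [hitLE_succ hh hA]
    by_cases hx : x ∈ A
    · rw [Set.indicator_of_mem hx, Set.indicator_of_notMem (by simpa using hx : x ∉ Aᶜ)]
      simp
    · rw [Set.indicator_of_notMem hx, Set.indicator_of_mem (by simpa using hx : x ∈ Aᶜ),
        zero_add]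
      haveI := hh.1 x
      calc ∫⁻ y, hitLE h A t y ∂(h x) ≤ ∫⁻ _, 1 ∂(h x) := lintegral_mono (fun y => ih y)
        _ = 1 := by simp

lemma hitLE_mono (x : X) {t t' : ℕ} (htt : t ≤ t') : hitLE h A t x ≤ hitLE h A t' x := by
  unfold hitLE
  exact Finset.sum_le_sum_of_subset (Finset.range_subset_range.mpr (by omega))

lemma hitLE_of_mem (hh : IsMarkov h) (hA : MeasurableSet A) {x : X} (hx : x ∈ A) (t : ℕ) :
    hitLE h A t x = 1 := by
  refine le_antisymm (hitLE_le_one hh hA t x) ?_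
  calc (1:ℝ≥0∞) = hitLE h A 0 x := by rw [hitLE_zero, Set.indicator_of_mem hx]
    _ ≤ hitLE h A t x := hitLE_mono x (Nat.zero_le t)

lemma surv_succ (hh : IsMarkov h) (hA : MeasurableSet A) (t : ℕ) {x : X} (hx : x ∉ A) :
    1 - hitLE h A (t+1) x = ∫⁻ y, (1 - hitLE h A t y) ∂(h x) := by
  rw [hitLE_succ hh hA, Set.indicator_of_notMem hx,
    Set.indicator_of_mem (by simpa using hx : x ∈ Aᶜ), zero_add]
  haveI := hh.1 x
  have hsum : ∫⁻ y, (1 - hitLE h A t y) ∂(h x) + ∫⁻ y, hitLE h A t y ∂(h x) = 1 := by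
    rw [← lintegral_add_right _ (hitLE_measurable hh hA t)]
    have : ∀ y, (1 - hitLE h A t y) + hitLE h A t y = 1 :=
      fun y => tsub_add_cancel_of_le (hitLE_le_one hh hA t y)
    rw [lintegral_congr this]; simp
  have hle : ∫⁻ y, hitLE h A t y ∂(h x) ≤ 1 := by
    calc ∫⁻ y, hitLE h A t y ∂(h x) ≤ ∫⁻ _, 1 ∂(h x) :=
        lintegral_mono (fun y => hitLE_le_one hh hA t y)
      _ = 1 := by simp
  rw [add_comm] at hsum
  exact ENNReal.sub_eq_of_eq_add_rev (ne_top_of_le_ne_top one_ne_top hle) hsum.symm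

lemma surv_decay (hh : IsMarkov h) (hA : MeasurableSet A) (t : ℕ) :
    ∀ (s : ℕ) (x : X), 1 - hitLE h A (s + t) x
      ≤ (⨆ y, (1 - hitLE h A t y)) * (1 - hitLE h A s x) := by
  set c := ⨆ y, (1 - hitLE h A t y) with hc
  intro s
  induction s with
  | zero =>
    intro x
    by_cases hx : x ∈ A
    · rw [hitLE_of_mem hh hA hx]; simp
    · rw [zero_add, hitLE_zero, Set.indicator_of_notMem hx, tsub_zero, mul_one]
      exact le_iSup (fun y => (1 - hitLE h A t y)) x
  | succ s ih =>
    intro x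
    by_cases hx : x ∈ A
    · rw [hitLE_of_mem hh hA hx]; simp
    · have hss : s + 1 + t = (s + t) + 1 := by omega
      rw [hss, surv_succ hh hA (s+t) hx, surv_succ hh hA s hx]
      calc ∫⁻ y, (1 - hitLE h A (s + t) y) ∂(h x)
          ≤ ∫⁻ y, c * (1 - hitLE h A s y) ∂(h x) := lintegral_mono (fun y => ih y)
        _ = c * ∫⁻ y, (1 - hitLE h A s y) ∂(h x) :=
            lintegral_const_mul _ (measurable_const.sub (hitLE_measurable hh hA s))

lemma surv_pow (hh : IsMarkov h) (hA : MeasurableSet A) (t : ℕ) :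
    ∀ (j : ℕ) (x : X), 1 - hitLE h A (j * t) x ≤ (⨆ y, (1 - hitLE h A t y)) ^ j := by
  intro j
  induction j with
  | zero => intro x; simpa using tsub_le_self
  | succ j ih =>
    intro x
    have hjt : (j + 1) * t = j * t + t := by ring
    rw [hjt, pow_succ]
    calc 1 - hitLE h A (j * t + t) x
        ≤ (⨆ y, (1 - hitLE h A t y)) * (1 - hitLE h A (j * t) x) := surv_decay hh hA t (j*t) x
      _ ≤ (⨆ y, (1 - hitLE h A t y)) * (⨆ y, (1 - hitLE h A t y)) ^ j := by gcongr; exact ih x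
      _ = (⨆ y, (1 - hitLE h A t y)) ^ j * (⨆ y, (1 - hitLE h A t y)) := mul_comm _ _

lemma iterK_le_hitLE (hh : IsMarkov h) (hA : MeasurableSet A) :
    ∀ (m : ℕ) (x : X), iterK h m x A ≤ hitLE h A m x := by
  intro m
  induction m with
  | zero =>
    intro x
    rw [hitLE_zero]
    show Measure.dirac x A ≤ _
    rw [Measure.dirac_apply' _ hA]
    exact le_rfl
  | succ m ih =>
    intro x
    by_cases hx : x ∈ A
    · rw [hitLE_of_mem hh hA hx]
      haveI := (isMarkov_iterK hh (m+1)).1 x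
      exact prob_le_one
    · rw [iterK_apply hh hA m x, hitLE_succ hh hA, Set.indicator_of_notMem hx,
        Set.indicator_of_mem (by simpa using hx : x ∈ Aᶜ), zero_add]
      exact lintegral_mono (fun y => ih y)

lemma expHit_le (hh : IsMarkov h) (hA : MeasurableSet A) {t : ℕ} (ht : t ≠ 0)
    {p : ℝ≥0∞} (hp1 : p ≤ 1) (hp : ∀ y, p ≤ hitLE h A t y) (x : X) :
    expHit h A x ≤ (t : ℝ≥0∞) * p⁻¹ := by
  set c := ⨆ y, (1 - hitLE h A t y) with hc
  have hcp : c ≤ 1 - p := iSup_le fun y => tsub_le_tsub_left (hp y) 1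
  have hpc : p ≤ 1 - c := by
    calc p = 1 - (1 - p) := (ENNReal.sub_sub_cancel one_ne_top hp1).symm
      _ ≤ 1 - c := tsub_le_tsub_left hcp 1
  have hbound : ∀ n : ℕ, 1 - hitLE h A n x ≤ c ^ (n / t) := by
    intro n
    calc 1 - hitLE h A n x ≤ 1 - hitLE h A ((n / t) * t) x :=
        tsub_le_tsub_left (hitLE_mono x (Nat.div_mul_le_self n t)) 1
      _ ≤ c ^ (n / t) := surv_pow hh hA t (n / t) x
  haveI : NeZero t := ⟨ht⟩
  calc expHit h A x ≤ ∑' n : ℕ, c ^ (n / t) := ENNReal.tsum_le_tsum hbound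
    _ = ∑' (q : ℕ × Fin t), c ^ ((q.1 * t + (q.2 : ℕ)) / t) := by
        rw [← (Nat.divModEquiv t).symm.tsum_eq (fun n => c ^ (n / t))]
        rfl
    _ = ∑' (q : ℕ × Fin t), c ^ q.1 := by
        congr 1
        funext q
        congr 1
        rcases q with ⟨j, r⟩
        simp only
        rw [add_comm, Nat.add_mul_div_right _ _ (Nat.pos_of_ne_zero ht),
          Nat.div_eq_of_lt r.2, zero_add]
    _ = ∑' (j : ℕ), ∑' (_ : Fin t), c ^ j := by
        exact ENNReal.tsum_prod (f := fun (j : ℕ) (_ : Fin t) => c ^ j)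
    _ = ∑' (j : ℕ), (t : ℝ≥0∞) * c ^ j := by
        congr 1; funext j; simp [tsum_fintype]
    _ = (t : ℝ≥0∞) * ∑' (j : ℕ), c ^ j := ENNReal.tsum_mul_left
    _ = (t : ℝ≥0∞) * (1 - c)⁻¹ := by rw [ENNReal.tsum_geometric]
    _ ≤ (t : ℝ≥0∞) * p⁻¹ := by gcongr

end Hit


/-- the maximum hitting time of the `k`-skeleton is bounded by a
constant multiple of `⌈t̄_m / k⌉`. -/
theorem stmt10 (α : ℝ) (hα : 0 < α) :
    ∃ C : ℝ, 0 < C ∧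
      ∀ (X : Type) [MetricSpace X] [MeasurableSpace X] [BorelSpace X]
        (g : X → Measure X) (π : Measure X),
        IsMarkov g → IsProbabilityMeasure π → Stationary g π →
        stdMix g (1 / 4) ≠ ⊤ →
        ∀ k : ℕ, 1 ≤ k →
          maxHit (iterK g k) π α ≤
            ENNReal.ofReal C * (⌈(stdMix g (1 / 4)).toReal / (k : ℝ)⌉₊ : ℝ≥0∞) := by
  classical
  -- choose ℓ depending only on α
  obtain ⟨ℓ, hℓ1, hℓ⟩ : ∃ ℓ : ℕ, 1 ≤ ℓ ∧ ((1:ℝ≥0∞)/4) ^ ℓ ≤ ENNReal.ofReal α / 2 := by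
    have hα2 : (ENNReal.ofReal α / 2) ≠ 0 := by
      simp [ENNReal.div_eq_top, ENNReal.div_ne_zero]
      exact hα
    obtain ⟨n, hn⟩ := ENNReal.exists_inv_two_pow_lt hα2
    refine ⟨max 1 n, le_max_left _ _, ?_⟩
    calc ((1:ℝ≥0∞)/4) ^ (max 1 n) ≤ ((1:ℝ≥0∞)/2) ^ (max 1 n) := by
          gcongr <;> norm_num
      _ ≤ ((1:ℝ≥0∞)/2) ^ n :=
          pow_le_pow_right_of_le_one' ENNReal.half_le_self (le_max_right 1 n)
      _ = (2:ℝ≥0∞)⁻¹ ^ n := by rw [one_div]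
      _ ≤ ENNReal.ofReal α / 2 := hn.le
  refine ⟨(ℓ : ℝ) * (2 / α), ?_, ?_⟩
  · have hℓpos : (0:ℝ) < (ℓ:ℝ) := by exact_mod_cast hℓ1
    positivity
  intro X _ _ _ g π hg hπ hs hfin k hk
  have hex : ∃ t : ℕ, dbar g t ≤ 1/4 := by
    by_contra hc
    push_neg at hc
    apply hfin
    rw [stdMix, iInf_eq_top]
    intro t
    exact iInf_eq_top.mpr (fun hcond => absurd hcond (not_le.mpr (hc t)))
  set t₀ : ℕ := Nat.find hex with ht₀def
  have ht₀ : dbar g t₀ ≤ 1/4 := Nat.find_spec hex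
  have hstd : stdMix g (1/4) = (t₀ : ℝ≥0∞) := by
    refine le_antisymm ?_ ?_
    · exact iInf_le_of_le t₀ (iInf_le_of_le ht₀ le_rfl)
    · refine le_iInf fun t => le_iInf fun hcond => ?_
      exact_mod_cast Nat.find_min' hex hcond
  rw [hstd, ENNReal.toReal_natCast]
  set hker : X → Measure X := iterK g k with hkerdef
  have hh : IsMarkov hker := isMarkov_iterK hg k
  refine iSup_le fun x => iSup_le fun A => iSup_le fun hA => iSup_le fun hπA => ?_
  have hApos : π A ≠ 0 := by
    intro h0
    rw [h0, le_zero_iff] at hπA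
    exact absurd hπA (ENNReal.ofReal_pos.mpr hα).ne'
  rcases Nat.eq_zero_or_pos t₀ with ht0 | ht0pos
  · -- degenerate case: `d̄(0) ≤ 1/4` forces every point to lie in `A`
    have hxA : x ∈ A := by
      obtain ⟨a, ha⟩ : A.Nonempty := Set.nonempty_iff_ne_empty.mpr (by
        intro hAe; exact hApos (by rw [hAe]; exact measure_empty))
      by_contra hxA
      have hdiff : x ≠ a := fun hxa => hxA (hxa ▸ ha)
      have hB : MeasurableSet ({a} : Set X) := (isClosed_singleton).measurableSet
      have h1 : (1:ℝ≥0∞) ≤ dbar g 0 := by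
        have := sub_apply_le_tv' (iterK g 0 x) (iterK g 0 a) hB
        have hxa : iterK g 0 x = Measure.dirac x := rfl
        have haa : iterK g 0 a = Measure.dirac a := rfl
        rw [hxa, haa] at this
        rw [Measure.dirac_apply' _ hB, Measure.dirac_apply' _ hB] at this
        rw [Set.indicator_of_mem (Set.mem_singleton a), Set.indicator_of_notMem (by simpa using hdiff)] at this
        simpa using le_trans (le_of_eq rfl) (this.trans (le_trans (tv_le_dbar hg 0 x a) le_rfl))
      rw [ht0] at ht₀
      have : (1:ℝ≥0∞) ≤ 1/4 := h1.trans ht₀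
      norm_num at this
    have hzero : expHit hker A x = 0 := by
      rw [expHit]
      refine ENNReal.tsum_eq_zero.mpr fun t => ?_
      rw [hitLE_of_mem hh hA hxA]
      simp
    rw [hzero]
    exact zero_le
  · -- main case
    set N : ℕ := ⌈(t₀ : ℝ) / (k : ℝ)⌉₊ with hNdef
    have hkpos : (0:ℝ) < (k:ℝ) := by exact_mod_cast hk
    have hNpos : 0 < N := Nat.ceil_pos.mpr (by positivity)
    have hNk : t₀ ≤ N * k := by
      have h1 := Nat.le_ceil ((t₀ : ℝ) / (k : ℝ))
      rw [div_le_iff₀ hkpos] at h1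
      exact_mod_cast h1
    set m : ℕ := ℓ * N with hmdef
    have hm0 : m ≠ 0 := by positivity
    set p : ℝ≥0∞ := ENNReal.ofReal α / 2 with hpdef
    have hαle : ENNReal.ofReal α ≤ 1 := le_trans hπA prob_le_one
    have hp1 : p ≤ 1 := le_trans ENNReal.half_le_self hαle
    have hpne : p ≠ 0 := by
      simp [hpdef, ENNReal.div_ne_zero]
      exact hα
    -- the uniform hitting estimate
    have hunif : ∀ y, p ≤ hitLE hker A m y := by
      intro y
      have hd : dbar g (m * k) ≤ ENNReal.ofReal α / 2 := by
        have h1 : ℓ * t₀ ≤ m * k := by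
          rw [hmdef, mul_assoc]
          exact Nat.mul_le_mul_left ℓ hNk
        calc dbar g (m * k) ≤ dbar g (ℓ * t₀) := dbar_anti hg h1
          _ ≤ (dbar g t₀) ^ ℓ := dbar_pow hg t₀ ℓ
          _ ≤ ((1:ℝ≥0∞)/4) ^ ℓ := by gcongr
          _ ≤ ENNReal.ofReal α / 2 := hℓ
      have hdne : dbar g (m * k) ≠ ∞ :=
        ne_top_of_le_ne_top (ENNReal.div_lt_top ENNReal.ofReal_ne_top (by norm_num)).ne hd
      have hiter : iterK hker m y A = iterK g (m * k) y A := by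
        rw [hkerdef, iterK_skeleton hg k m y]
      have hlow : p ≤ iterK hker m y A := by
        have h2 : π A - iterK g (m * k) y A ≤ dbar g (m * k) :=
          le_trans (sub_apply_le_tv' (iterK g (m*k) y) π hA)
            (tv_pi_le_dbar hg hπ hs (m * k) y)
        have h3 : π A ≤ dbar g (m * k) + iterK g (m * k) y A := tsub_le_iff_right.mp h2
        have h4 : p + dbar g (m * k) ≤ dbar g (m * k) + iterK g (m * k) y A := by
          calc p + dbar g (m * k) ≤ ENNReal.ofReal α / 2 + ENNReal.ofReal α / 2 := by
                rw [hpdef]; gcongr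
            _ = ENNReal.ofReal α := ENNReal.add_halves _
            _ ≤ π A := hπA
            _ ≤ dbar g (m * k) + iterK g (m * k) y A := h3
        rw [hiter]
        rw [add_comm (dbar g (m*k)) _] at h4
        exact (ENNReal.add_le_add_iff_right hdne).mp h4
      exact hlow.trans (iterK_le_hitLE hh hA m y)
    have hmain := expHit_le hh hA hm0 hp1 hunif x
    refine hmain.trans ?_
    -- arithmetic
    have hpinv : p⁻¹ = ENNReal.ofReal (2 / α) := by
      rw [hpdef, ENNReal.inv_div (Or.inl (by norm_num)) (Or.inl (by norm_num)),
        ENNReal.ofReal_div_of_pos hα]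
      norm_num
    rw [hpinv]
    have hC : ENNReal.ofReal ((ℓ : ℝ) * (2 / α)) = (ℓ : ℝ≥0∞) * ENNReal.ofReal (2 / α) := by
      rw [ENNReal.ofReal_mul (by positivity), ENNReal.ofReal_natCast]
    rw [hC, hmdef]
    push_cast
    ring_nf
    exact le_rfl
end MixHit
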